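/- In a finite Newtonian poset, any two distinct unrelated elements have the same past and the same future: if x and y are incomparable then {z : z ≺ x} = {z : z ≺ y} and {z : x ≺ z} = {z : y ≺ z}. -/

import Mathlib

/-- The level of `x`: the cardinality of the longest chain with maximal element `x`. -/
noncomputable def level {α : Type*} [PartialOrder α] (x : α) : ℕ∞ :=
  Set.chainHeight {y | y ≤ x} (· < ·)

lemma chainHeight_ne_top_of_fintype {α : Type} [PartialOrder α] [Fintype α] (s : Set α) :
    s.chainHeight (· < ·) ≠ ⊤ := by
  exact Set.chainHeight_ne_top_of_finite s _ (Set.toFinite s)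

lemma level_lt_of_lt {α : Type} [PartialOrder α] [Fintype α] {a b : α} (h : a < b) :
    level a < level b := by
  have h1 : level a ≤ Set.chainHeight {y : α | y < b} (· < ·) :=
    Set.chainHeight_mono _ _ _ (fun z hz => lt_of_le_of_lt hz h)
  have h2 : ({y : α | y ≤ b}) = insert b {y : α | y < b} := by
    ext z; simp [le_iff_lt_or_eq, or_comm]
  have h3 : Set.chainHeight {y : α | y < b} (· < ·) + 1 ≤ level b := by
    obtain ⟨t, hts, hte, htc⟩ :=
      Set.exists_eq_chainHeight_of_finite {y : α | y < b} (· < ·) (Set.toFinite _)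
    rw [level, ← hte, ← Set.encard_insert_of_notMem (fun hb => lt_irrefl b (hts hb))]
    apply Set.encard_le_chainHeight_of_isChain
    · rw [h2]; exact Set.insert_subset_insert hts
    · exact htc.insert fun c hc _ => Or.inr (hts hc)
  exact lt_of_lt_of_le ((ENat.lt_add_one_iff (chainHeight_ne_top_of_fintype _)).mpr h1) h3

/-- In a finite Newtonian poset, any two incomparable elements have the same
past and the same future. -/
theorem newtonian_incomparable_same_past_future
    {α : Type} [PartialOrder α] [Fintype α]
    (hN : ∀ x y : α, level y < level x → y < x)
    (x y : α) (hxy : ¬ x ≤ y) (hyx : ¬ y ≤ x) :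
    {z : α | z < x} = {z : α | z < y} ∧ {z : α | x < z} = {z : α | y < z} := by
  have hlev : level x = level y := by
    rcases lt_trichotomy (level x) (level y) with h | h | h
    · exact absurd (hN y x h).le hxy
    · exact h
    · exact absurd (hN x y h).le hyx
  constructor
  · ext z
    simp only [Set.mem_setOf_eq]
    constructor
    · intro hz; exact hN y z (hlev ▸ level_lt_of_lt hz)
    · intro hz; exact hN x z (hlev ▸ level_lt_of_lt hz)
  · ext z
    simp only [Set.mem_setOf_eq]
    constructor
    · intro hz; exact hN z y (hlev ▸ level_lt_of_lt hz)
    · intro hz; exact hN z x (hlev ▸ level_lt_of_lt hz)
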